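/- For every real s >= 1, (1 + 2s) * sqrt(s^2 - 1) >= (2 + s) * arcosh(s), where arcosh is the inverse hyperbolic cosine. -/

import Mathlib

open Real

/-- The inverse hyperbolic cosine (for `s ≥ 1`). -/
noncomputable def arcosh (s : ℝ) : ℝ := Real.log (s + Real.sqrt (s ^ 2 - 1))

/-- For every `s ≥ 1`, `(1 + 2s)√(s² - 1) ≥ (2 + s) arcosh s`. -/
theorem arcosh_inequality (s : ℝ) (hs : 1 ≤ s) :
    (1 + 2 * s) * Real.sqrt (s ^ 2 - 1) ≥ (2 + s) * _root_.arcosh s := by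
  set t := Real.sqrt (s ^ 2 - 1) with ht
  have ht0 : 0 ≤ t := Real.sqrt_nonneg _
  have ht2 : t ^ 2 = s ^ 2 - 1 := Real.sq_sqrt (by nlinarith)
  have hlog : _root_.arcosh s ≤ t := by
    rw [_root_.arcosh, Real.log_le_iff_le_exp (by nlinarith)]
    have h1 : t ≤ Real.sinh t := (Real.self_le_sinh_iff).2 ht0
    have h2 : Real.cosh t ^ 2 = Real.sinh t ^ 2 + 1 := by
      have := Real.cosh_sq t; linarith
    have h3 : s ≤ Real.cosh t := by
      have hc := Real.one_le_cosh t
      nlinarith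
    have := Real.cosh_add_sinh t
    linarith
  nlinarith
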